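/- Let p be an odd prime and let φ : H_p → A_p = H_p/Z(H_p) be the canonical projection. For every subgroup B of A_p of order p there exists a subgroup B̂ of H_p of order p such that φ restricted to B̂ is a group isomorphism onto B. -/

import Mathlib

open Matrix

/-- The unitriangular matrix `M(a,b,c)`. -/
def Hmat (p : ℕ) (a b c : ZMod p) : Matrix (Fin 3) (Fin 3) (ZMod p) :=
  !![1, a, b; 0, 1, c; 0, 0, 1]

lemma Hmat_mul (p : ℕ) (a b c a' b' c' : ZMod p) :
    Hmat p a b c * Hmat p a' b' c' = Hmat p (a + a') (b + b' + a * c') (c + c') := by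
  simp only [Hmat, Matrix.mul_fin_three]
  congr 1 <;> ring

lemma Hmat_one (p : ℕ) : Hmat p 0 0 0 = 1 := by
  rw [Matrix.one_fin_three]; rfl

/-- `M(a,b,c)` as an element of `GL₃(𝔽_p)`. -/
def Hgl (p : ℕ) (a b c : ZMod p) : GL (Fin 3) (ZMod p) :=
  ⟨Hmat p a b c, Hmat p (-a) (a * c - b) (-c),
    by rw [Hmat_mul]; rw [show a + -a = 0 by ring, show b + (a*c-b) + a * -c = 0 by ring,
      show c + -c = 0 by ring, Hmat_one],
    by rw [Hmat_mul]; rw [show -a + a = 0 by ring, show (a*c-b) + b + -a * c = 0 by ring,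
      show -c + c = 0 by ring, Hmat_one]⟩

lemma Hgl_mul (p : ℕ) (a b c a' b' c' : ZMod p) :
    Hgl p a b c * Hgl p a' b' c' = Hgl p (a + a') (b + b' + a * c') (c + c') :=
  Units.ext (Hmat_mul p a b c a' b' c')

/-- The discrete Heisenberg group `H_p`: the subgroup of `GL₃(𝔽_p)` consisting of the
upper unitriangular matrices `M(a,b,c)`. -/
def Heisenberg (p : ℕ) : Subgroup (GL (Fin 3) (ZMod p)) where
  carrier := { g | ∃ a b c : ZMod p, g = Hgl p a b c }
  one_mem' := ⟨0, 0, 0, Units.ext (Hmat_one p).symm⟩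
  mul_mem' := by
    rintro g h ⟨a, b, c, rfl⟩ ⟨a', b', c', rfl⟩
    exact ⟨_, _, _, Hgl_mul p a b c a' b' c'⟩
  inv_mem' := by
    rintro g ⟨a, b, c, rfl⟩
    exact ⟨-a, a * c - b, -c, Units.ext rfl⟩

/-- The element `X = M(1,0,0)` of `H_p`. -/
def He.X (p : ℕ) : Heisenberg p := ⟨Hgl p 1 0 0, 1, 0, 0, rfl⟩

/-- The element `Y = M(0,0,1)` of `H_p`. -/
def He.Y (p : ℕ) : Heisenberg p := ⟨Hgl p 0 0 1, 0, 0, 1, rfl⟩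

/-- The element `Z = M(0,1,0)` of `H_p`. -/
def He.Z (p : ℕ) : Heisenberg p := ⟨Hgl p 0 1 0, 0, 1, 0, rfl⟩

lemma Hgl_congr (p : ℕ) {a b c a' b' c' : ZMod p} (h1 : a = a') (h2 : b = b')
    (h3 : c = c') : Hgl p a b c = Hgl p a' b' c' := by
  subst h1; subst h2; subst h3; rfl

lemma Hgl_zero_eq_one (p : ℕ) : Hgl p 0 0 0 = 1 := Units.ext (Hmat_one p)

lemma Hgl_pow (p : ℕ) (a b c : ZMod p) (n : ℕ) :
    (Hgl p a b c) ^ n =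
      Hgl p (n * a) ((n : ZMod p) * b + (n.choose 2 : ℕ) * (a * c)) (n * c) := by
  induction n with
  | zero =>
    rw [pow_zero, Hgl_congr p (show ((0:ℕ):ZMod p) * a = 0 by push_cast; ring)
      (show ((0:ℕ):ZMod p) * b + ((Nat.choose 0 2 : ℕ) : ZMod p) * (a * c) = 0 by
        norm_num)
      (show ((0:ℕ):ZMod p) * c = 0 by push_cast; ring), Hgl_zero_eq_one]
  | succ n ih =>
    rw [pow_succ, ih, Hgl_mul]
    refine Hgl_congr p (by push_cast; ring) ?_ (by push_cast; ring)
    have h2 : (n + 1).choose 2 = n.choose 1 + n.choose 2 := Nat.choose_succ_succ n 1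
    rw [h2, Nat.choose_one_right]
    push_cast
    ring

lemma Heisenberg_pow_p (p : ℕ) (hp : p.Prime) (hodd : Odd p) (x : Heisenberg p) :
    x ^ p = 1 := by
  obtain ⟨a, b, c, h⟩ := x.2
  have h2p : 2 < p := by
    rcases hp.eq_two_or_odd' with h2 | _
    · exact absurd (h2 ▸ hodd) (by decide)
    · exact lt_of_le_of_ne hp.two_le (by rintro rfl; exact absurd hodd (by decide))
  have hps : ((p : ℕ) : ZMod p) = 0 := ZMod.natCast_self p
  have hch : ((p.choose 2 : ℕ) : ZMod p) = 0 :=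
    (ZMod.natCast_eq_zero_iff _ _).mpr
      (Nat.Prime.dvd_choose_self hp (by norm_num) h2p)
  apply Subtype.ext
  rw [SubmonoidClass.coe_pow, h, Hgl_pow, hps, hch,
    Hgl_congr p (show (0:ZMod p) * a = 0 by ring)
      (show (0:ZMod p) * b + (0:ZMod p) * (a * c) = 0 by ring)
      (show (0:ZMod p) * c = 0 by ring), Hgl_zero_eq_one]
  rfl

theorem Heisenberg_lift_of_order_p_subgroup (p : ℕ) (hp : p.Prime) (hodd : Odd p)
    (B : Subgroup ((Heisenberg p) ⧸ Subgroup.center (Heisenberg p)))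
    (hB : Nat.card B = p) :
    ∃ Bhat : Subgroup (Heisenberg p),
      Nat.card Bhat = p ∧
      Subgroup.map (QuotientGroup.mk' (Subgroup.center (Heisenberg p))) Bhat = B ∧
      Set.InjOn (QuotientGroup.mk' (Subgroup.center (Heisenberg p))) (Bhat : Set (Heisenberg p)) := by
  set φ := QuotientGroup.mk' (Subgroup.center (Heisenberg p)) with hφ
  have hp1 : 1 < p := hp.one_lt
  haveI : Finite B := Nat.finite_of_card_ne_zero (by omega)
  haveI : Nontrivial B := Finite.one_lt_card_iff_nontrivial.mp (by omega)
  obtain ⟨x, hx1⟩ := exists_ne (1 : B)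
  -- the order of x (as an element of the quotient group) is p
  have hdvd : orderOf x ∣ p := by
    have := orderOf_dvd_natCard x; rwa [hB] at this
  have hordx : orderOf x = p := by
    rcases hp.eq_one_or_self_of_dvd _ hdvd with h | h
    · exact absurd (orderOf_eq_one_iff.mp h) hx1
    · exact h
  set b : (Heisenberg p) ⧸ Subgroup.center (Heisenberg p) := x.1 with hb
  have hordb : orderOf b = p := by rw [hb, Subgroup.orderOf_coe, hordx]
  have hbB : b ∈ B := x.2
  obtain ⟨g, hg⟩ := QuotientGroup.mk'_surjective (Subgroup.center (Heisenberg p)) b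
  have hgp : g ^ p = 1 := Heisenberg_pow_p p hp hodd g
  have hgne : g ≠ 1 := by
    rintro rfl
    rw [_root_.map_one] at hg
    rw [← hg] at hordb
    rw [orderOf_one] at hordb
    omega
  have hordg : orderOf g = p := by
    rcases hp.eq_one_or_self_of_dvd _ (orderOf_dvd_of_pow_eq_one hgp) with h | h
    · exact absurd (orderOf_eq_one_iff.mp h) hgne
    · exact h
  refine ⟨Subgroup.zpowers g, ?_, ?_, ?_⟩
  · rw [Nat.card_zpowers, hordg]
  · rw [MonoidHom.map_zpowers, hg]
    refine Subgroup.eq_of_le_of_card_ge (Subgroup.zpowers_le.mpr hbB) ?_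
    rw [Nat.card_zpowers, hordb, hB]
  · rintro x1 ⟨m, rfl⟩ x2 ⟨n, rfl⟩ heq
    simp only [map_zpow, hg] at heq
    have h1 : b ^ (m - n) = 1 := by
      rw [_root_.zpow_sub, (show b ^ m = b ^ n by rw [← hg]; exact heq), mul_inv_cancel]
    obtain ⟨k, hk⟩ := (orderOf_dvd_iff_zpow_eq_one.mpr h1)
    rw [hordb] at hk
    have h2 : g ^ (m - n) = 1 := by
      rw [hk, _root_.zpow_mul, zpow_natCast, hgp, _root_.one_zpow]
    have h3 : g ^ m = g ^ n * g ^ (m - n) := by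
      rw [← _root_.zpow_add]; congr 1; ring
    show g ^ m = g ^ n
    rw [h3, h2, mul_one]
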